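/- Let {λ_k}_{k∈M} and {μ_k}_{k∈M} be two interlacing real sequences without finite accumulation points, none containing 0, with λ_k < μ_k < λ_{k+1} on ℝ₊ and μ_k < λ_k < μ_{k+1} on ℝ₋ (or the reverse), and suppose Σ_{k∈M}(μ_k − λ_k) converges absolutely with Π_{k∈M} μ_k/λ_k ≠ 1. Define τ_n = (μ_n − λ_n) Π_{k≠n} (μ_k − λ_n)/(λ_k − λ_n) / [λ_n(Π_{k∈M} μ_k/λ_k − 1)]. Then τ_n > 0 for every n ∈ M. -/

import Mathlib

set_option maxHeartbeats 800000

private lemma abs_log_le_two_mul {x : ℝ} (hx : 1/2 ≤ x) : |Real.log x| ≤ 2 * |x - 1| := by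
  have hx0 : 0 < x := by linarith
  rcases le_or_gt 1 x with h | h
  · rw [abs_of_nonneg (Real.log_nonneg h), abs_of_nonneg (by linarith)]
    have := Real.log_le_sub_one_of_pos hx0
    linarith
  · rw [abs_of_nonpos (Real.log_nonpos (by linarith) h.le), abs_of_neg (by linarith)]
    have h1 : Real.log x⁻¹ ≤ x⁻¹ - 1 := Real.log_le_sub_one_of_pos (by positivity)
    rw [Real.log_inv] at h1
    have hxi : x⁻¹ * x = 1 := inv_mul_cancel₀ hx0.ne'
    nlinarith

private lemma summable_log_of_abs_sub_one {ι : Type*} {f : ι → ℝ}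
    (h : Summable fun i => |f i - 1|) : Summable fun i => Real.log (f i) := by
  apply Summable.of_norm_bounded_eventually (h.mul_left 2)
  have hev : ∀ᶠ i in Filter.cofinite, |f i - 1| < 1/2 :=
    h.tendsto_cofinite_zero.eventually (gt_mem_nhds (by norm_num : (0:ℝ) < 1/2))
  filter_upwards [hev] with i hi
  have h2 : 1/2 ≤ f i := by
    have := abs_lt.mp hi
    linarith [this.1]
  simpa [Real.norm_eq_abs] using abs_log_le_two_mul h2

private lemma tprod_pos_aux {ι : Type*} {f : ι → ℝ} (hpos : ∀ i, 0 < f i)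
    (hlog : Summable fun i => Real.log (f i)) : 0 < ∏' i, f i := by
  have h2 := Real.rexp_tsum_eq_tprod hpos hlog
  rw [← h2]
  exact Real.exp_pos _

private lemma prod_le_one_of_pair {ι : Type*} [DecidableEq ι] {f : ι → ℝ}
    (h1 : ∀ i, f i ≤ 1)
    (hpair : ∀ j k, j ≠ k → f j < 0 → f k < 0 →
      0 < f j * f k ∧ f j * f k ≤ 1 ∧ ∀ l, f l < 0 → l = j ∨ l = k)
    (F : Finset ι) : ∏ i ∈ F, f i ≤ 1 := by
  by_cases hneg : ∃ j ∈ F, f j < 0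
  · obtain ⟨j, hjF, hj⟩ := hneg
    by_cases hneg2 : ∃ k ∈ F, k ≠ j ∧ f k < 0
    · obtain ⟨k, hkF, hkj, hk⟩ := hneg2
      obtain ⟨hp1, hp2, hp3⟩ := hpair j k (Ne.symm hkj) hj hk
      have hrest : ∀ i ∈ (F.erase j).erase k, 0 ≤ f i := by
        intro i hi
        by_contra hcon
        push_neg at hcon
        rcases hp3 i hcon with rfl | rfl
        · exact (Finset.ne_of_mem_erase (Finset.mem_of_mem_erase hi)) rfl
        · exact (Finset.ne_of_mem_erase hi) rfl
      have hkF' : k ∈ F.erase j := Finset.mem_erase.mpr ⟨hkj, hkF⟩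
      have e1 : f k * ∏ i ∈ (F.erase j).erase k, f i = ∏ i ∈ F.erase j, f i :=
        Finset.mul_prod_erase _ _ hkF'
      have e2 : f j * ∏ i ∈ F.erase j, f i = ∏ i ∈ F, f i := Finset.mul_prod_erase _ _ hjF
      have hr0 : 0 ≤ ∏ i ∈ (F.erase j).erase k, f i := Finset.prod_nonneg hrest
      have hr1 : ∏ i ∈ (F.erase j).erase k, f i ≤ 1 :=
        Finset.prod_le_one hrest (fun i _ => h1 i)
      have e3 : ∏ i ∈ F, f i = (f j * f k) * ∏ i ∈ (F.erase j).erase k, f i := by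
        rw [← e2, ← e1]; ring
      rw [e3]
      nlinarith
    · push_neg at hneg2
      have hrest : ∀ i ∈ F.erase j, 0 ≤ f i := by
        intro i hi
        by_contra hcon
        push_neg at hcon
        exact (Finset.ne_of_mem_erase hi)
          (by by_contra hij; exact absurd hcon (not_lt.mpr (hneg2 i (Finset.mem_of_mem_erase hi) hij)))
      rw [← Finset.mul_prod_erase F f hjF]
      have h0 : 0 ≤ ∏ i ∈ F.erase j, f i := Finset.prod_nonneg hrest
      nlinarith
  · push_neg at hneg
    exact Finset.prod_le_one (fun i hi => hneg i hi) (fun i _ => h1 i)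

private lemma P_pos (M : Set ℤ) (lam mu : ℤ → ℝ) (n : ℤ)
    (haccl : ∀ C : ℝ, {k : ℤ | k ∈ M ∧ |lam k| ≤ C}.Finite)
    (hsum : Summable fun k : M => |mu k.1 - lam k.1|)
    (hg : ∀ k : ℤ, k ∈ M → k ≠ n → 0 < (mu k - lam n) / (lam k - lam n)) :
    0 < ∏' k : {k : M // k.1 ≠ n}, (mu k.1.1 - lam n) / (lam k.1.1 - lam n) := by
  set ι := {k : M // k.1 ≠ n}
  have hgpos : ∀ i : ι, 0 < (mu i.1.1 - lam n) / (lam i.1.1 - lam n) :=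
    fun i => hg i.1.1 i.1.2 i.2
  have hsum' : Summable fun i : ι => |mu i.1.1 - lam i.1.1| :=
    hsum.comp_injective Subtype.coe_injective
  have hinj : Function.Injective (fun i : ι => i.1.1) := by
    intro a b hab
    exact Subtype.ext (Subtype.ext hab)
  have hfin : {i : ι | |lam i.1.1| ≤ |lam n| + 1}.Finite := by
    have h0 := haccl (|lam n| + 1)
    have := h0.preimage (f := fun i : ι => i.1.1) (Set.injOn_of_injective hinj)
    apply this.subset
    intro i hi
    exact ⟨i.1.2, hi⟩
  have hev1 : ∀ᶠ i : ι in Filter.cofinite, 1 ≤ |lam i.1.1 - lam n| := by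
    rw [Filter.eventually_cofinite]
    apply hfin.subset
    intro i hi
    simp only [Set.mem_setOf_eq, not_le] at hi ⊢
    have := abs_sub_abs_le_abs_sub (lam i.1.1) (lam n)
    linarith
  have hsumg : Summable fun i : ι => |(mu i.1.1 - lam n) / (lam i.1.1 - lam n) - 1| := by
    refine Summable.of_norm_bounded_eventually
      (f := fun i : ι => |(mu i.1.1 - lam n) / (lam i.1.1 - lam n) - 1|)
      (g := fun i : ι => |mu i.1.1 - lam i.1.1|) hsum' ?_
    filter_upwards [hev1] with i hi
    have hne : lam i.1.1 - lam n ≠ 0 := by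
      intro h
      rw [h] at hi
      norm_num at hi
    have heq : (mu i.1.1 - lam n) / (lam i.1.1 - lam n) - 1
        = (mu i.1.1 - lam i.1.1) / (lam i.1.1 - lam n) := by
      field_simp
      ring
    rw [Real.norm_eq_abs, abs_abs, heq, abs_div]
    exact div_le_self (abs_nonneg _) hi
  exact tprod_pos_aux hgpos (summable_log_of_abs_sub_one hsumg)

/-- Positivity of the would-be normalizing constants τ_n built from two
interlacing sequences (Theorem on necessary and sufficient conditions):
τ_n = (μ_n−λ_n) Π_{k≠n} (μ_k−λ_n)/(λ_k−λ_n) / [λ_n (Π μ_k/λ_k − 1)] > 0. -/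
theorem tau_positive
    (M : Set ℤ) (hM : M.OrdConnected) (lam mu : ℤ → ℝ)
    (hne0 : ∀ k ∈ M, lam k ≠ 0 ∧ mu k ≠ 0)
    (haccl : ∀ C : ℝ, {k : ℤ | k ∈ M ∧ |lam k| ≤ C}.Finite)
    (haccm : ∀ C : ℝ, {k : ℤ | k ∈ M ∧ |mu k| ≤ C}.Finite)
    (hmono : ∀ k : ℤ, k ∈ M → k + 1 ∈ M → lam k < lam (k + 1))
    -- interlacing, with μ shifted right on ℝ₊ and left on ℝ₋, or the reverse
    (hinter :
      (∀ k ∈ M, (0 < lam k → lam k < mu k ∧ (k + 1 ∈ M → mu k < lam (k + 1))) ∧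
        (lam k < 0 → mu k < lam k ∧ (k - 1 ∈ M → lam (k - 1) < mu k))) ∨
      (∀ k ∈ M, (0 < lam k → mu k < lam k ∧ (k - 1 ∈ M → lam (k - 1) < mu k)) ∧
        (lam k < 0 → lam k < mu k ∧ (k + 1 ∈ M → mu k < lam (k + 1)))))
    (hsum : Summable fun k : M => |mu k.1 - lam k.1|)
    (hkappa : (∏' k : M, mu k.1 / lam k.1) ≠ 1) :
    ∀ n ∈ M, 0 <
      (mu n - lam n) * (∏' k : {k : M // k.1 ≠ n}, (mu k.1.1 - lam n) / (lam k.1.1 - lam n))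
        / (lam n * ((∏' k : M, mu k.1 / lam k.1) - 1)) := by
  intro n hn
  -- the κ-product is multipliable, else it would equal 1
  have hmul : Multipliable (fun k : M => mu k.1 / lam k.1) := by
    by_contra h
    exact hkappa (tprod_eq_one_of_not_multipliable h)
  -- strict monotonicity of lam on M
  have hmem : ∀ a ∈ M, ∀ b ∈ M, ∀ c : ℤ, a ≤ c → c ≤ b → c ∈ M := by
    intro a ha b hb c h1 h2
    exact hM.out ha hb ⟨h1, h2⟩
  have hmono' : ∀ j ∈ M, ∀ k ∈ M, j < k → lam j < lam k := by
    have key : ∀ d : ℕ, ∀ j : ℤ, j ∈ M → (j + d + 1) ∈ M → lam j < lam (j + d + 1) := by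
      intro d
      induction d with
      | zero =>
        intro j hj h1
        have := hmono j hj (by simpa using h1)
        simpa using this
      | succ d ih =>
        intro j hj h1
        have heq : (j + (d + 1 : ℕ) + 1 : ℤ) = (j + d + 1) + 1 := by push_cast; ring
        rw [heq] at h1 ⊢
        have hmid : (j + d + 1 : ℤ) ∈ M := hmem j hj _ h1 _ (by omega) (by omega)
        exact (ih j hj hmid).trans (hmono _ hmid h1)
    intro j hj k hk hjk
    obtain ⟨d, hd⟩ : ∃ d : ℕ, k = j + d + 1 := ⟨(k - j - 1).toNat, by omega⟩
    subst hd
    exact key d j hj hk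
  have hmono'' : ∀ j ∈ M, ∀ k ∈ M, j ≤ k → lam j ≤ lam k := by
    intro j hj k hk hjk
    rcases eq_or_lt_of_le hjk with rfl | h
    · exact le_refl _
    · exact (hmono' j hj k hk h).le
  set κ := ∏' k : M, mu k.1 / lam k.1 with hκ
  rcases hinter with hcase | hcase
  · -- Case 1: all ratios μ_k/λ_k > 1
    have hfac : ∀ k : ℤ, k ∈ M → 1 < mu k / lam k := by
      intro k hk
      rcases (hne0 k hk).1.lt_or_gt with hneg | hpos
      · have h := ((hcase k hk).2 hneg).1
        exact (one_lt_div_of_neg hneg).mpr h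
      · have h := ((hcase k hk).1 hpos).1
        exact (one_lt_div hpos).mpr h
    -- κ > 1
    have hκgt : 1 < κ := by
      have hk1 : 1 < mu n / lam n := hfac n hn
      have hev : ∀ᶠ F : Finset M in Filter.atTop,
          mu n / lam n ≤ ∏ k ∈ F, mu k.1 / lam k.1 := by
        refine Filter.eventually_atTop.mpr ⟨{⟨n, hn⟩}, fun F hF => ?_⟩
        have hnF : (⟨n, hn⟩ : M) ∈ F := hF (Finset.mem_singleton_self _)
        rw [← Finset.mul_prod_erase F _ hnF]
        have hone : (1:ℝ) ≤ ∏ k ∈ F.erase ⟨n, hn⟩, mu k.1 / lam k.1 := by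
          have := Finset.prod_le_prod (f := fun _ : M => (1:ℝ))
            (g := fun k : M => mu k.1 / lam k.1) (s := F.erase ⟨n, hn⟩)
            (fun i _ => by norm_num) (fun i _ => (hfac i.1 i.2).le)
          simpa using this
        nlinarith
      exact lt_of_lt_of_le hk1 (ge_of_tendsto hmul.hasProd hev)
    -- positivity of factors of P
    have hg : ∀ k : ℤ, k ∈ M → k ≠ n → 0 < (mu k - lam n) / (lam k - lam n) := by
      intro k hk hkn
      rcases lt_or_gt_of_ne hkn with hlt | hgt
      · -- k < n : both μ_k - λ_n and λ_k - λ_n negative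
        have hl : lam k < lam n := hmono' k hk n hn hlt
        have hmu : mu k < lam n := by
          rcases (hne0 k hk).1.lt_or_gt with hneg | hpos
          · have := ((hcase k hk).2 hneg).1
            linarith
          · have hk1 : (k + 1 : ℤ) ∈ M := hmem k hk n hn _ (by omega) (by omega)
            have h1 := ((hcase k hk).1 hpos).2 hk1
            have h2 : lam (k + 1) ≤ lam n := hmono'' _ hk1 n hn (by omega)
            linarith
        exact div_pos_iff.mpr (Or.inr ⟨by linarith, by linarith⟩)
      · -- n < k : both positive
        have hl : lam n < lam k := hmono' n hn k hk hgt
        have hmu : lam n < mu k := by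
          rcases (hne0 k hk).1.lt_or_gt with hneg | hpos
          · have hk1 : (k - 1 : ℤ) ∈ M := hmem n hn k hk _ (by omega) (by omega)
            have h1 := ((hcase k hk).2 hneg).2 hk1
            have h2 : lam n ≤ lam (k - 1) := hmono'' n hn _ hk1 (by omega)
            linarith
          · have := ((hcase k hk).1 hpos).1
            linarith
        exact div_pos (by linarith) (by linarith)
    have hP := P_pos M lam mu n haccl hsum hg
    rw [div_pos_iff]
    rcases (hne0 n hn).1.lt_or_gt with hneg | hpos
    · have h := ((hcase n hn).2 hneg).1
      exact Or.inr ⟨mul_neg_of_neg_of_pos (by linarith) hP,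
        mul_neg_of_neg_of_pos hneg (by linarith)⟩
    · have h := ((hcase n hn).1 hpos).1
      exact Or.inl ⟨mul_pos (by linarith) hP, mul_pos hpos (by linarith)⟩
  · -- Case 2: all ratios μ_k/λ_k < 1
    have hfac : ∀ k : ℤ, k ∈ M → mu k / lam k < 1 := by
      intro k hk
      rcases (hne0 k hk).1.lt_or_gt with hneg | hpos
      · have h := ((hcase k hk).2 hneg).1
        exact (div_lt_one_of_neg hneg).mpr h
      · have h := ((hcase k hk).1 hpos).1
        exact (div_lt_one hpos).mpr h
    -- structure of negative factors
    have hstruct : ∀ j k : ℤ, j ∈ M → k ∈ M → j < k →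
        mu j / lam j < 0 → mu k / lam k < 0 →
        k = j + 1 ∧ lam j < 0 ∧ 0 < lam k ∧ 0 < mu j ∧ mu k < 0 ∧
          mu j < lam k ∧ lam j < mu k := by
      intro j k hj hk hjk hfj hfk
      have hsj := div_neg_iff.mp hfj
      have hsk := div_neg_iff.mp hfk
      have hljk : lam j < lam k := hmono' j hj k hk hjk
      rcases hsj with ⟨hmuj, hlamj⟩ | ⟨hmuj, hlamj⟩
      · -- lam j < 0, mu j > 0
        have hj1 : (j + 1 : ℤ) ∈ M := hmem j hj k hk _ (by omega) (by omega)
        have hmujlt := (((hcase j hj).2 hlamj).2) hj1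
        rcases hsk with ⟨hmuk, hlamk⟩ | ⟨hmuk, hlamk⟩
        · -- lam k < 0, mu k > 0 : contradiction
          exfalso
          have : lam (j + 1) ≤ lam k := hmono'' _ hj1 k hk (by omega)
          linarith
        · -- lam k > 0, mu k < 0
          have hk1 : (k - 1 : ℤ) ∈ M := hmem j hj k hk _ (by omega) (by omega)
          have hmukgt := (((hcase k hk).1 hlamk).2) hk1
          have hkj1 : k = j + 1 := by
            by_contra hne
            have h2 : (j + 1 : ℤ) ≤ k - 1 := by omega
            have : lam (j + 1) ≤ lam (k - 1) := hmono'' _ hj1 _ hk1 h2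
            linarith
          refine ⟨hkj1, hlamj, hlamk, hmuj, hmuk, ?_, ?_⟩
          · rw [hkj1] at *
            linarith
          · have : (k - 1 : ℤ) = j := by omega
            rw [this] at hmukgt
            linarith
      · -- lam j > 0, mu j < 0 : then lam k > 0 and mu k < 0, contradiction
        exfalso
        have hlamk : 0 < lam k := by linarith
        have hmuk : mu k < 0 := by
          rcases hsk with ⟨h1, h2⟩ | ⟨h1, h2⟩
          · linarith
          · exact h1
        have hk1 : (k - 1 : ℤ) ∈ M := hmem j hj k hk _ (by omega) (by omega)
        have hmukgt := (((hcase k hk).1 hlamk).2) hk1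
        have : lam j ≤ lam (k - 1) := hmono'' j hj _ hk1 (by omega)
        linarith
    -- κ ≤ 1 via partial products ≤ 1
    have hκlt : κ < 1 := by
      have hpair : ∀ j k : M, j ≠ k → mu j.1 / lam j.1 < 0 → mu k.1 / lam k.1 < 0 →
          0 < (mu j.1 / lam j.1) * (mu k.1 / lam k.1) ∧
          (mu j.1 / lam j.1) * (mu k.1 / lam k.1) ≤ 1 ∧
          ∀ l : M, mu l.1 / lam l.1 < 0 → l = j ∨ l = k := by
        have hpair' : ∀ j k : M, j.1 < k.1 → mu j.1 / lam j.1 < 0 → mu k.1 / lam k.1 < 0 →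
            0 < (mu j.1 / lam j.1) * (mu k.1 / lam k.1) ∧
            (mu j.1 / lam j.1) * (mu k.1 / lam k.1) ≤ 1 ∧
            ∀ l : M, mu l.1 / lam l.1 < 0 → l = j ∨ l = k := by
          intro j k hjk hfj hfk
          obtain ⟨hadj, hlj, hlk, hmj, hmk, h1, h2⟩ :=
            hstruct j.1 k.1 j.2 k.2 hjk hfj hfk
          have hprod : (mu j.1 / lam j.1) * (mu k.1 / lam k.1)
              = (mu j.1 * mu k.1) / (lam j.1 * lam k.1) := by
            rw [div_mul_div_comm]
          constructor
          · rw [hprod]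
            exact div_pos_iff.mpr (Or.inr ⟨by nlinarith, by nlinarith⟩)
          constructor
          · rw [hprod]
            have hden : 0 < -(lam j.1 * lam k.1) := by nlinarith
            rw [div_le_one_of_neg (by nlinarith : lam j.1 * lam k.1 < 0)]
            nlinarith
          · intro l hfl
            by_contra hcon
            push_neg at hcon
            obtain ⟨hlj', hlk'⟩ := hcon
            have hlnej : l.1 ≠ j.1 := fun h => hlj' (Subtype.ext h)
            have hlnek : l.1 ≠ k.1 := fun h => hlk' (Subtype.ext h)
            rcases lt_trichotomy l.1 j.1 with h | h | h
            · obtain ⟨hadj2, _⟩ := hstruct l.1 j.1 l.2 j.2 h hfl hfj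
              obtain ⟨hadj3, _⟩ := hstruct l.1 k.1 l.2 k.2 (by omega) hfl hfk
              omega
            · exact hlnej h
            · rcases lt_trichotomy l.1 k.1 with h' | h' | h'
              · omega
              · exact hlnek h'
              · obtain ⟨hadj2, _⟩ := hstruct k.1 l.1 k.2 l.2 h' hfk hfl
                obtain ⟨hadj3, _⟩ := hstruct j.1 l.1 j.2 l.2 (by omega) hfj hfl
                omega
        intro j k hjk hfj hfk
        have hne : j.1 ≠ k.1 := fun h => hjk (Subtype.ext h)
        rcases hne.lt_or_gt with h | h
        · exact hpair' j k h hfj hfk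
        · obtain ⟨ha, hb, hc⟩ := hpair' k j h hfk hfj
          exact ⟨by rw [mul_comm]; exact ha, by rw [mul_comm]; exact hb,
            fun l hl => (hc l hl).symm⟩
      have hle : κ ≤ 1 := by
        apply le_of_tendsto hmul.hasProd
        apply Filter.Eventually.of_forall
        intro F
        exact prod_le_one_of_pair (fun i => (hfac i.1 i.2).le) hpair F
      exact lt_of_le_of_ne hle hkappa
    -- positivity of factors of P
    have hg : ∀ k : ℤ, k ∈ M → k ≠ n → 0 < (mu k - lam n) / (lam k - lam n) := by
      intro k hk hkn
      rcases lt_or_gt_of_ne hkn with hlt | hgt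
      · have hl : lam k < lam n := hmono' k hk n hn hlt
        have hmu : mu k < lam n := by
          rcases (hne0 k hk).1.lt_or_gt with hneg | hpos
          · have hk1 : (k + 1 : ℤ) ∈ M := hmem k hk n hn _ (by omega) (by omega)
            have h1 := ((hcase k hk).2 hneg).2 hk1
            have h2 : lam (k + 1) ≤ lam n := hmono'' _ hk1 n hn (by omega)
            linarith
          · have := ((hcase k hk).1 hpos).1
            linarith
        exact div_pos_iff.mpr (Or.inr ⟨by linarith, by linarith⟩)
      · have hl : lam n < lam k := hmono' n hn k hk hgt
        have hmu : lam n < mu k := by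
          rcases (hne0 k hk).1.lt_or_gt with hneg | hpos
          · have := ((hcase k hk).2 hneg).1
            linarith
          · have hk1 : (k - 1 : ℤ) ∈ M := hmem n hn k hk _ (by omega) (by omega)
            have h1 := ((hcase k hk).1 hpos).2 hk1
            have h2 : lam n ≤ lam (k - 1) := hmono'' n hn _ hk1 (by omega)
            linarith
        exact div_pos (by linarith) (by linarith)
    have hP := P_pos M lam mu n haccl hsum hg
    rw [div_pos_iff]
    rcases (hne0 n hn).1.lt_or_gt with hneg | hpos
    · have h := ((hcase n hn).2 hneg).1
      exact Or.inl ⟨mul_pos (by linarith) hP, mul_pos_of_neg_of_neg hneg (by linarith)⟩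
    · have h := ((hcase n hn).1 hpos).1
      exact Or.inr ⟨mul_neg_of_neg_of_pos (by linarith) hP,
        mul_neg_of_pos_of_neg hpos (by linarith)⟩
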